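/- Let X be a subshift of edge-to-edge rhombus tilings on a finite shapeset 𝒯 and let 𝒯' ⊆ 𝒯 be such that X' := ρ_{𝒯'}(X) = X ∩ X_{𝒯'}. Define the map φ_{𝒯'} sending a finite 𝒯'-tileset 𝐓' to the 𝒯-tileset 𝐓' ∪ 𝐓_fresh, where 𝐓_fresh contains, for each shape of 𝒯∖𝒯', one tile of that shape carrying a distinct fresh colour (not used in 𝐓') on each of its four edges. Then φ_{𝒯'} is computable and, for every finite 𝒯'-tileset 𝐓', there exists a valid 𝐓'-tiling x with π(x) ∈ X' if and only if there exists a valid φ_{𝒯'}(𝐓')-tiling y with π(y) ∈ X. Consequently Domino(X') many-one reduces to Domino(X). -/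

import Mathlib

open Set Metric

noncomputable section

/-- Points of the euclidean plane. -/
abbrev Pt : Type := EuclideanSpace ℝ (Fin 2)

/-- A rhombus tile in the plane, given by a position (a distinguished vertex)
and its two edge vectors. -/
structure Rhombus where
  pos : Pt
  u : Pt
  v : Pt

namespace Rhombus

/-- A genuine rhombus: linearly independent edge vectors of equal euclidean length. -/
def IsValid (r : Rhombus) : Prop :=
  LinearIndependent ℝ ![r.u, r.v] ∧ ‖r.u‖ = ‖r.v‖

/-- The support of a rhombus: the closed parallelogram it spans. -/
def support (r : Rhombus) : Set Pt :=
  {x | ∃ s t : ℝ, s ∈ Icc (0 : ℝ) 1 ∧ t ∈ Icc (0 : ℝ) 1 ∧ x = r.pos + s • r.u + t • r.v}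

/-- The four vertices of a rhombus. -/
def vertices (r : Rhombus) : Set Pt :=
  {r.pos, r.pos + r.u, r.pos + r.v, r.pos + r.u + r.v}

/-- The four (closed) edges of a rhombus, indexed as in the paper:
edge `0` from `pos` to `pos + u`, edge `1` from `pos + u` to `pos + u + v`,
edge `2` from `pos + u + v` to `pos + v`, edge `3` from `pos + v` to `pos`. -/
def edge (r : Rhombus) : Fin 4 → Set Pt :=
  ![segment ℝ r.pos (r.pos + r.u),
    segment ℝ (r.pos + r.u) (r.pos + r.u + r.v),
    segment ℝ (r.pos + r.u + r.v) (r.pos + r.v),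
    segment ℝ (r.pos + r.v) r.pos]

/-- The set of edges of a rhombus. -/
def edges (r : Rhombus) : Set (Set Pt) := Set.range r.edge

/-- Translation of a rhombus by a vector. -/
def translate (r : Rhombus) (w : Pt) : Rhombus := ⟨r.pos + w, r.u, r.v⟩

/-- The center of a rhombus. -/
def center (r : Rhombus) : Pt := r.pos + (2⁻¹ : ℝ) • r.u + (2⁻¹ : ℝ) • r.v

/-- Two rhombi are translates of each other (same shape up to translation). -/
def SameShape (r s : Rhombus) : Prop := r.u = s.u ∧ r.v = s.v

/-- `w` is one of the two edge directions of `r` (up to sign). -/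
def HasEdgeDir (r : Rhombus) (w : Pt) : Prop :=
  r.u = w ∨ r.u = -w ∨ r.v = w ∨ r.v = -w

end Rhombus

/-- Two rhombi are in edge-to-edge position: they are disjoint, share exactly one
common vertex, or share exactly one full common edge. -/
def EdgeToEdgePair (r s : Rhombus) : Prop :=
  r.support ∩ s.support = ∅ ∨
  (∃ p, p ∈ r.vertices ∧ p ∈ s.vertices ∧ r.support ∩ s.support = {p}) ∨
  (∃ e, e ∈ r.edges ∧ e ∈ s.edges ∧ r.support ∩ s.support = e)

/-- An edge-to-edge rhombus tiling of the plane: a covering of the plane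
without overlap where any two tiles are disjoint, share exactly one vertex or
share a full common edge. -/
def IsTiling (x : Set Rhombus) : Prop :=
  (∀ r ∈ x, r.IsValid) ∧
  (⋃ r ∈ x, r.support) = univ ∧
  ∀ r ∈ x, ∀ s ∈ x, r ≠ s → EdgeToEdgePair r s

/-- Every tile of `x` is a translate of a shape of the shapeset `T`. -/
def UsesShapes (T : Set Rhombus) (x : Set Rhombus) : Prop :=
  ∀ r ∈ x, ∃ s ∈ T, r.SameShape s

/-- An edge-to-edge tiling whose tiles are translates of shapes of `T`. -/
def IsTilingOn (T : Set Rhombus) (x : Set Rhombus) : Prop :=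
  IsTiling x ∧ UsesShapes T x

/-- Support of a patch. -/
def PatchSupport (P : Set Rhombus) : Set Pt := ⋃ r ∈ P, r.support

/-- A patch: a finite nonempty edge-to-edge set of rhombi whose support is
simply connected (no holes). -/
def IsPatch (P : Set Rhombus) : Prop :=
  P.Finite ∧ P.Nonempty ∧ (∀ r ∈ P, r.IsValid) ∧
  (∀ r ∈ P, ∀ s ∈ P, r ≠ s → EdgeToEdgePair r s) ∧
  SimplyConnectedSpace (PatchSupport P)

/-- Translation of a set of rhombi. -/
def translatePatch (P : Set Rhombus) (w : Pt) : Set Rhombus :=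
  (fun r => r.translate w) '' P

/-- The pattern `f` appears in `x`: some translate of `f` is a sub-collection of `x`. -/
def Appears (f : Set Rhombus) (x : Set Rhombus) : Prop :=
  ∃ w : Pt, translatePatch f w ⊆ x

/-- Vertices of a patch. -/
def PatchVertices (P : Set Rhombus) : Set Pt := ⋃ r ∈ P, r.vertices

/-- The support of `P` contains a disk of radius `ρ` centered at a vertex of `P`. -/
def HasRadius (P : Set Rhombus) (ρ : ℝ) : Prop :=
  ∃ c ∈ PatchVertices P, closedBall c ρ ⊆ PatchSupport P

/-- `P` has minimal radius `ρ`: its support contains a disk of radius `ρ` centered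
at one of its vertices, and removing any tile breaks this property. -/
def MinimalRadius (P : Set Rhombus) (ρ : ℝ) : Prop :=
  HasRadius P ρ ∧ ∀ r ∈ P, ¬ HasRadius (P \ {r}) ρ

/-- A rhombus Wang tile: a rhombus with a colour (a natural number) on each edge. -/
structure ColoredRhombus where
  shape : Rhombus
  color : Fin 4 → ℕ

namespace ColoredRhombus

def translate (t : ColoredRhombus) (w : Pt) : ColoredRhombus :=
  ⟨t.shape.translate w, t.color⟩

/-- Two coloured tiles are equal up to translation. -/
def SameTile (t s : ColoredRhombus) : Prop :=
  t.shape.SameShape s.shape ∧ t.color = s.color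

end ColoredRhombus

/-- The colour-erasing operator `π`. -/
def eraseColors (x : Set ColoredRhombus) : Set Rhombus := ColoredRhombus.shape '' x

def translateColoredPatch (P : Set ColoredRhombus) (w : Pt) : Set ColoredRhombus :=
  (fun t => t.translate w) '' P

/-- Any two tiles sharing an edge carry the same colour on the shared edge. -/
def ColorMatching (x : Set ColoredRhombus) : Prop :=
  ∀ t ∈ x, ∀ s ∈ x, t.shape ≠ s.shape →
    ∀ i j : Fin 4, t.shape.edge i = s.shape.edge j → t.color i = s.color j

/-- No two distinct coloured tiles occupy the same rhombus. -/
def ShapeInjective (x : Set ColoredRhombus) : Prop :=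
  ∀ t ∈ x, ∀ s ∈ x, t.shape = s.shape → t = s

/-- A valid tiling by rhombus Wang tiles. -/
def IsColoredTiling (x : Set ColoredRhombus) : Prop :=
  IsTiling (eraseColors x) ∧ ShapeInjective x ∧ ColorMatching x

/-- A valid patch of rhombus Wang tiles. -/
def IsColoredPatch (x : Set ColoredRhombus) : Prop :=
  IsPatch (eraseColors x) ∧ ShapeInjective x ∧ ColorMatching x

/-- All tiles of `x` are translates of tiles of the tileset `T`. -/
def TilesFrom (T : Set ColoredRhombus) (x : Set ColoredRhombus) : Prop :=
  ∀ t ∈ x, ∃ s ∈ T, t.SameTile s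

/-- A subshift on the shapeset `T`: a set of `T`-tilings that is invariant under
translation and closed for the tiling topology (a tiling all of whose finite
patterns appear in tilings of `X` belongs to `X`). -/
def IsSubshift (T : Set Rhombus) (X : Set (Set Rhombus)) : Prop :=
  (∀ x ∈ X, IsTilingOn T x) ∧
  (∀ x ∈ X, ∀ w : Pt, translatePatch x w ∈ X) ∧
  (∀ x, IsTilingOn T x →
    (∀ P, P ⊆ x → P.Finite → P.Nonempty → ∃ y ∈ X, Appears P y) → x ∈ X)

/-- The shape `r` is uniformly recurrent in the tiling `x`: for some `R > 0`,
every disk of radius `R` contains an occurrence (a translate) of `r`. -/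
def UniformlyRecurrentIn (r : Rhombus) (x : Set Rhombus) : Prop :=
  ∃ R : ℝ, 0 < R ∧ ∀ p : Pt, ∃ s ∈ x, s.SameShape r ∧ s.support ⊆ closedBall p R

/-- A shape uniformly recurrent subshift: every shape appearing somewhere in `X`
is uniformly recurrent in every tiling of `X`. -/
def ShapeUniformlyRecurrent (X : Set (Set Rhombus)) : Prop :=
  ∀ r : Rhombus, (∃ y ∈ X, ∃ s ∈ y, s.SameShape r) →
    ∀ x ∈ X, UniformlyRecurrentIn r x

/-- The restriction of `X` to the tilings using only shapes of `T'`. -/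
def restrictShapes (T' : Set Rhombus) (X : Set (Set Rhombus)) : Set (Set Rhombus) :=
  {x ∈ X | UsesShapes T' x}

/-- The subshift on `T` defined by the sequence `F` of forbidden patterns. -/
def SubshiftOfForbidden (T : Set Rhombus) (F : ℕ → Set Rhombus) : Set (Set Rhombus) :=
  {x | IsTilingOn T x ∧ ∀ n : ℕ, ¬ Appears (F n) x}

/-- A chain of rhombuses of normal vector `w` in the tiling `x`: a bi-infinite
sequence of tiles in which any two consecutive tiles share a full common edge of
direction `w`, the chain crossing each of its tiles from one of its two
`w`-edges to the other one. -/
structure Chain (x : Set Rhombus) (w : Pt) where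
  seq : ℤ → Rhombus
  mem : ∀ n : ℤ, seq n ∈ x
  shares : ∀ n : ℤ, ∃ a : Pt,
    segment ℝ a (a + w) ∈ (seq n).edges ∧
    segment ℝ a (a + w) ∈ (seq (n + 1)).edges ∧
    (seq n).support ∩ (seq (n + 1)).support = segment ℝ a (a + w)
  progress : ∀ n : ℤ,
    (seq (n - 1)).support ∩ (seq n).support ≠ (seq n).support ∩ (seq (n + 1)).support

/-- The set of tiles of a chain. -/
def Chain.tiles {x : Set Rhombus} {w : Pt} (c : Chain x w) : Set Rhombus :=
  Set.range c.seq

/-- A symbolic Wang tile on the shapeset indexed by `Fin k`: a shape index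
together with the four edge colours `(a₀, a₁, a₂, a₃)`. -/
abbrev SymbTile (k : ℕ) : Type := Fin k × ℕ × ℕ × ℕ × ℕ

/-- The colours of a symbolic tile, as a function on edge indices. -/
def SymbTile.colors {k : ℕ} (t : SymbTile k) : Fin 4 → ℕ :=
  ![t.2.1, t.2.2.1, t.2.2.2.1, t.2.2.2.2]

/-- The geometric coloured tile `t` is a translate of the symbolic tile `p`. -/
def Realizes {k : ℕ} (shapes : Fin k → Rhombus) (t : ColoredRhombus) (p : SymbTile k) :
    Prop :=
  t.shape.SameShape (shapes p.1) ∧ t.color = SymbTile.colors p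

/-- The Domino problem on the subshift `X`: given a tileset `T`, decide whether
there is a valid tiling by translates of tiles of `T` whose colour-erased image
belongs to `X`. -/
def DominoPred {k : ℕ} (shapes : Fin k → Rhombus) (X : Set (Set Rhombus))
    (T : List (SymbTile k)) : Prop :=
  ∃ x : Set ColoredRhombus, IsColoredTiling x ∧
    (∀ t ∈ x, ∃ p ∈ T, Realizes shapes t p) ∧ eraseColors x ∈ X

/-- A displacement code: a formal integer combination of edge vectors of the shapes. -/
abbrev Disp (k : ℕ) : Type := List (Fin k × ℤ × ℤ)

/-- The vector coded by a displacement code. -/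
def dispVec {k : ℕ} (shapes : Fin k → Rhombus) (d : Disp k) : Pt :=
  (d.map (fun e => (e.2.1 : ℝ) • (shapes e.1).u + (e.2.2 : ℝ) • (shapes e.1).v)).sum

/-- A code for a pattern of (uncoloured) shapes: each entry is a shape index and
the displacement of the corresponding tile. -/
abbrev PatternCode (k : ℕ) : Type := List (Fin k × Disp k)

/-- The pattern coded by a pattern code. -/
def decodePattern {k : ℕ} (shapes : Fin k → Rhombus) (c : PatternCode k) : Set Rhombus :=
  {r | ∃ e ∈ c, r = (shapes e.1).translate (dispVec shapes e.2)}

/-- A code for a pattern of coloured tiles. -/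
abbrev ColoredCode (k : ℕ) : Type := List (SymbTile k × Disp k)

/-- The coloured pattern coded by a coloured pattern code. -/
def decodeColored {k : ℕ} (shapes : Fin k → Rhombus) (c : ColoredCode k) :
    Set ColoredRhombus :=
  {t | ∃ e ∈ c,
    t = ColoredRhombus.mk ((shapes e.1.1).translate (dispVec shapes e.2))
          (SymbTile.colors e.1)}

/-- A decision problem is `Π⁰₁` (co-computably enumerable): there is a total
computable `f` such that `A x ↔ ∀ n, f x n = true`. -/
def Pi01 {α : Type} [Primcodable α] (A : α → Prop) : Prop :=
  ∃ f : α → ℕ → Bool, Computable₂ f ∧ ∀ a, A a ↔ ∀ n : ℕ, f a n = true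

/-- A decision problem is `Π⁰₁`-hard: every `Π⁰₁` problem many-one reduces to it. -/
def Pi01Hard {α : Type} [Primcodable α] (A : α → Prop) : Prop :=
  ∀ (β : Type) [Primcodable β], ∀ B : β → Prop, Pi01 B → ManyOneReducible B A

/-- The four colours of a symbolic tile, as a list. -/
def tileColors {k : ℕ} (t : SymbTile k) : List ℕ :=
  [t.2.1, t.2.2.1, t.2.2.2.1, t.2.2.2.2]

/-- All the colours of a list of symbolic tiles. -/
def allColors {k : ℕ} : List (SymbTile k) → List ℕ
  | [] => []
  | t :: ts => tileColors t ++ allColors ts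

/-- `T = T' ++ Tfresh`, where `Tfresh` has one tile for each shape outside `S`,
all whose colours are pairwise distinct fresh colours not used in `T'`. -/
def FreshExtension {k : ℕ} (S : Finset (Fin k)) (T' T : List (SymbTile k)) : Prop :=
  ∃ Tf : List (SymbTile k), T = T' ++ Tf ∧
    (∀ t ∈ Tf, t.1 ∉ S) ∧
    (∀ i : Fin k, i ∉ S → ∃ t ∈ Tf, t.1 = i) ∧
    (allColors Tf).Nodup ∧
    ∀ c ∈ allColors Tf, c ∉ allColors T'


/-! ### Auxiliary lemmas -/

section Aux

lemma pair_coeffs {u v : Pt} (h : LinearIndependent ℝ ![u, v]) :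
    ∀ a b : ℝ, a • u + b • v = 0 → a = 0 ∧ b = 0 :=
  LinearIndependent.pair_iff.mp h

lemma u_ne_zero {u v : Pt} (h : LinearIndependent ℝ ![u, v]) : u ≠ 0 := by
  intro hu
  have := (pair_coeffs h 1 0 (by simp [hu])).1
  norm_num at this

lemma support_isClosed (r : Rhombus) : IsClosed r.support := by
  have : r.support =
      (fun p : ℝ × ℝ => r.pos + p.1 • r.u + p.2 • r.v) '' (Icc (0:ℝ) 1 ×ˢ Icc (0:ℝ) 1) := by
    ext z
    constructor
    · rintro ⟨s, t, hs, ht, rfl⟩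
      exact ⟨(s, t), ⟨hs, ht⟩, rfl⟩
    · rintro ⟨⟨s, t⟩, ⟨hs, ht⟩, rfl⟩
      exact ⟨s, t, hs, ht, rfl⟩
  rw [this]
  exact ((isCompact_Icc.prod isCompact_Icc).image (by fun_prop)).isClosed

lemma seg_mem_iff {x y z : Pt} :
    z ∈ segment ℝ x y ↔ ∃ t ∈ Icc (0:ℝ) 1, z = x + t • (y - x) := by
  rw [segment_eq_image']
  constructor
  · rintro ⟨t, ht, rfl⟩; exact ⟨t, ht, rfl⟩
  · rintro ⟨t, ht, rfl⟩; exact ⟨t, ht, rfl⟩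

/-- Segments with the same direction vector are equal only if they coincide. -/
lemma seg_same_dir {a b u : Pt} (hu : u ≠ 0)
    (h : segment ℝ a (a + u) = segment ℝ b (b + u)) : a = b := by
  have h1 : a ∈ segment ℝ b (b + u) := h ▸ left_mem_segment ℝ a (a + u)
  have h2 : b ∈ segment ℝ a (a + u) := h.symm ▸ left_mem_segment ℝ b (b + u)
  rw [seg_mem_iff] at h1 h2
  obtain ⟨t, ht, h1⟩ := h1
  obtain ⟨t', ht', h2⟩ := h2
  have key : (t + t') • u = 0 := by
    have e1 : (t + t') • u = (b + t • (b + u - b) - a) + (a + t' • (a + u - a) - b) := by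
      module
    rw [← h1, ← h2] at e1
    simpa using e1
  rcases smul_eq_zero.mp key with h0 | h0
  · have : t = 0 := by linarith [ht.1, ht'.1]
    rw [h1, this]; simp
  · exact absurd h0 hu

lemma v_ne_zero {u v : Pt} (h : LinearIndependent ℝ ![u, v]) : v ≠ 0 := by
  intro hv
  have := (pair_coeffs h 0 1 (by simp [hv])).2
  norm_num at this

lemma exists_sep {u v : Pt} (h : LinearIndependent ℝ ![u, v]) :
    ∃ ρ : ℝ, 0 < ρ ∧ ∀ w : Pt, ‖w‖ < ρ → ∃ a b : ℝ, w = a • u + b • v ∧ |a| < 1 ∧ |b| < 1 := by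
  have hcard : Fintype.card (Fin 2) = Module.finrank ℝ Pt := by
    simp [finrank_euclideanSpace]
  let bb : Module.Basis (Fin 2) ℝ Pt := basisOfLinearIndependentOfCardEqFinrank h hcard
  have hb : ⇑bb = ![u, v] := coe_basisOfLinearIndependentOfCardEqFinrank h hcard
  let L : Fin 2 → Pt →L[ℝ] ℝ := fun i => LinearMap.toContinuousLinearMap (bb.coord i)
  set C := max ‖L 0‖ ‖L 1‖ + 1 with hCdef
  have hC : 0 < C := by
    have := norm_nonneg (L 0)
    have := le_max_left ‖L 0‖ ‖L 1‖
    linarith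
  have key : ∀ i : Fin 2, ∀ w : Pt, ‖w‖ < 1 / C → |bb.repr w i| < 1 := by
    intro i w hw
    have h1 : |bb.repr w i| = ‖L i w‖ := by simp [L, Module.Basis.coord]
    have h3 : ‖L i‖ ≤ C := by
      fin_cases i
      · have := le_max_left ‖L 0‖ ‖L 1‖; simpa [hCdef] using by linarith
      · have := le_max_right ‖L 0‖ ‖L 1‖; simpa [hCdef] using by linarith
    rw [h1]
    calc ‖L i w‖ ≤ ‖L i‖ * ‖w‖ := (L i).le_opNorm w
      _ ≤ C * ‖w‖ := mul_le_mul_of_nonneg_right h3 (norm_nonneg w)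
      _ < C * (1 / C) := mul_lt_mul_of_pos_left hw hC
      _ = 1 := by field_simp
  refine ⟨1 / C, by positivity, fun w hw => ⟨bb.repr w 0, bb.repr w 1, ?_, key 0 w hw, key 1 w hw⟩⟩
  have hs := bb.sum_repr w
  rw [Fin.sum_univ_two] at hs
  rw [hb] at hs
  simpa using hs.symm

lemma seg_noncol {u v : Pt} (h : LinearIndependent ℝ ![u, v]) {x y P : Pt} {c d : ℝ}
    (hc : 0 < c) (hd : 0 < d) (h0 : P ∈ segment ℝ x y) (h1 : P + c • u ∈ segment ℝ x y)
    (h2 : P + d • v ∈ segment ℝ x y) : False := by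
  rw [segment_eq_image'] at h0 h1 h2
  obtain ⟨t0, _, e0⟩ := h0
  obtain ⟨t1, ht1, e1⟩ := h1
  obtain ⟨t2, _, e2⟩ := h2
  replace e0 : x + t0 • (y - x) = P := e0
  replace e1 : x + t1 • (y - x) = P + c • u := e1
  replace e2 : x + t2 • (y - x) = P + d • v := e2
  have ecu : c • u = (t1 - t0) • (y - x) := by
    have hid : (x + t1 • (y - x)) - (x + t0 • (y - x)) = (t1 - t0) • (y - x) := by module
    rw [e0, e1] at hid
    simpa using hid
  have edv : d • v = (t2 - t0) • (y - x) := by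
    have hid : (x + t2 • (y - x)) - (x + t0 • (y - x)) = (t2 - t0) • (y - x) := by module
    rw [e0, e2] at hid
    simpa using hid
  have comb : ((t2 - t0) * c) • u + (-((t1 - t0) * d)) • v = 0 := by
    have hid : ((t2 - t0) * c) • u + (-((t1 - t0) * d)) • v
        = (t2 - t0) • (c • u) - (t1 - t0) • (d • v) := by module
    rw [hid, ecu, edv]
    module
  have hA := (pair_coeffs h _ _ comb).1
  have ht2 : t2 = t0 := by
    rcases mul_eq_zero.mp hA with h' | h'
    · linarith
    · linarith
  have hdz : d • v = 0 := by rw [edv, ht2]; simp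
  rcases smul_eq_zero.mp hdz with h' | h'
  · linarith
  · exact v_ne_zero h h'

lemma edge_is_segment (r : Rhombus) (i : Fin 4) : ∃ x y, r.edge i = segment ℝ x y := by
  fin_cases i <;> exact ⟨_, _, rfl⟩

lemma not_e2e {r s : Rhombus} (h : LinearIndependent ℝ ![r.u, r.v])
    (hsu : s.u = r.u) (hsv : s.v = r.v) {a b : ℝ}
    (hpos : s.pos = r.pos + a • r.u + b • r.v) (ha : |a| < 1) (hb : |b| < 1) :
    ¬ EdgeToEdgePair r s := by
  obtain ⟨ha1, ha2⟩ := abs_lt.mp ha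
  obtain ⟨hb1, hb2⟩ := abs_lt.mp hb
  set a₁ := max 0 a with ha₁
  set b₁ := min 1 (1 + a) with hb₁
  set c₁ := max 0 b with hc₁
  set d₁ := min 1 (1 + b) with hd₁
  have hab : a₁ < b₁ := by
    rw [ha₁, hb₁, lt_min_iff, max_lt_iff, max_lt_iff]
    refine ⟨⟨by norm_num, by linarith⟩, ⟨by linarith, by linarith⟩⟩
  have hcd : c₁ < d₁ := by
    rw [hc₁, hd₁, lt_min_iff, max_lt_iff, max_lt_iff]
    refine ⟨⟨by norm_num, by linarith⟩, ⟨by linarith, by linarith⟩⟩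
  have ha₁0 : 0 ≤ a₁ := le_max_left _ _
  have hb₁1 : b₁ ≤ 1 := min_le_left _ _
  have hc₁0 : 0 ≤ c₁ := le_max_left _ _
  have hd₁1 : d₁ ≤ 1 := min_le_left _ _
  have ha₁a : a ≤ a₁ := le_max_right _ _
  have hb₁a : b₁ ≤ 1 + a := min_le_right _ _
  have hc₁b : b ≤ c₁ := le_max_right _ _
  have hd₁b : d₁ ≤ 1 + b := min_le_right _ _
  have mem_both : ∀ p q : ℝ, 0 ≤ p → p ≤ 1 → 0 ≤ q → q ≤ 1 → a ≤ p → p ≤ 1 + a →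
      b ≤ q → q ≤ 1 + b → (r.pos + p • r.u + q • r.v) ∈ r.support ∩ s.support := by
    intro p q h1 h2 h3 h4 h5 h6 h7 h8
    constructor
    · exact ⟨p, q, ⟨h1, h2⟩, ⟨h3, h4⟩, rfl⟩
    · refine ⟨p - a, q - b, ⟨by linarith, by linarith⟩, ⟨by linarith, by linarith⟩, ?_⟩
      rw [hsu, hsv, hpos]; module
  have hm0 := mem_both a₁ c₁ ha₁0 (by linarith) hc₁0 (by linarith) ha₁a (by linarith)
      hc₁b (by linarith)
  have hm1 := mem_both b₁ c₁ (by linarith) hb₁1 hc₁0 (by linarith) (by linarith) hb₁a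
      hc₁b (by linarith)
  have hm2 := mem_both a₁ d₁ ha₁0 (by linarith) (by linarith) hd₁1 ha₁a (by linarith)
      (by linarith) hd₁b
  have hP1 : r.pos + b₁ • r.u + c₁ • r.v
      = (r.pos + a₁ • r.u + c₁ • r.v) + (b₁ - a₁) • r.u := by module
  have hP2 : r.pos + a₁ • r.u + d₁ • r.v
      = (r.pos + a₁ • r.u + c₁ • r.v) + (d₁ - c₁) • r.v := by module
  rintro (hE | ⟨p, _, _, hset⟩ | ⟨e, heR, _, hset⟩)
  · rw [hE] at hm0; exact hm0
  · rw [hset] at hm0 hm1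
    have : (r.pos + a₁ • r.u + c₁ • r.v) = (r.pos + b₁ • r.u + c₁ • r.v) := by
      rw [hm0, hm1]
    have hz : (a₁ - b₁) • r.u + (0 : ℝ) • r.v = 0 := by
      have hid : (a₁ - b₁) • r.u + (0 : ℝ) • r.v
          = (r.pos + a₁ • r.u + c₁ • r.v) - (r.pos + b₁ • r.u + c₁ • r.v) := by module
      rw [hid, this, sub_self]
    have := (pair_coeffs h _ _ hz).1
    linarith
  · obtain ⟨i, rfl⟩ := heR
    obtain ⟨x, y, hxy⟩ := edge_is_segment r i
    rw [hxy] at hset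
    rw [hset] at hm0 hm1 hm2
    rw [hP1] at hm1
    rw [hP2] at hm2
    exact seg_noncol h (by linarith : (0:ℝ) < b₁ - a₁) (by linarith : (0:ℝ) < d₁ - c₁)
      hm0 hm1 hm2

lemma finite_of_separated {A : Set Pt} {c : Pt} {R ρ : ℝ} (hρ : 0 < ρ)
    (hb : A ⊆ closedBall c R) (hsep : ∀ p ∈ A, ∀ q ∈ A, p ≠ q → ρ ≤ dist p q) :
    A.Finite := by
  classical
  by_contra hinf
  replace hinf : A.Infinite := hinf
  obtain ⟨t, htf, hcover⟩ :=
    (Metric.totallyBounded_iff.mp (isCompact_closedBall c R).totallyBounded) (ρ / 2)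
      (by linarith)
  set F : Pt → Pt := fun p =>
    if h : ∃ q ∈ t, p ∈ ball q (ρ / 2) then h.choose else c with hF
  have hmaps : Set.MapsTo F A t := by
    intro p hp
    have hx : ∃ q ∈ t, p ∈ ball q (ρ / 2) := by simpa using hcover (hb hp)
    simp only [hF, dif_pos hx]
    exact hx.choose_spec.1
  obtain ⟨p, hp, q, hq, hne, heq⟩ := hinf.exists_ne_map_eq_of_mapsTo hmaps htf
  have hpball : p ∈ ball (F p) (ρ / 2) := by
    have hx : ∃ q ∈ t, p ∈ ball q (ρ / 2) := by simpa using hcover (hb hp)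
    simp only [hF, dif_pos hx]
    exact hx.choose_spec.2
  have hqball : q ∈ ball (F q) (ρ / 2) := by
    have hx : ∃ q' ∈ t, q ∈ ball q' (ρ / 2) := by simpa using hcover (hb hq)
    simp only [hF, dif_pos hx]
    exact hx.choose_spec.2
  have : dist p q < ρ := by
    have h1 : dist p (F p) < ρ / 2 := mem_ball.mp hpball
    have h2 : dist q (F p) < ρ / 2 := by rw [heq]; exact mem_ball.mp hqball
    calc dist p q ≤ dist p (F p) + dist (F p) q := dist_triangle _ _ _
      _ = dist p (F p) + dist q (F p) := by rw [dist_comm (F p) q]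
      _ < ρ := by linarith
  exact absurd (hsep p hp q hq hne) (by linarith)

lemma support_subset_ball (r : Rhombus) :
    r.support ⊆ closedBall r.pos (‖r.u‖ + ‖r.v‖) := by
  rintro z ⟨p, q, ⟨hp0, hp1⟩, ⟨hq0, hq1⟩, rfl⟩
  rw [mem_closedBall, dist_eq_norm]
  have : r.pos + p • r.u + q • r.v - r.pos = p • r.u + q • r.v := by module
  rw [this]
  calc ‖p • r.u + q • r.v‖ ≤ ‖p • r.u‖ + ‖q • r.v‖ := norm_add_le _ _
    _ = |p| * ‖r.u‖ + |q| * ‖r.v‖ := by rw [norm_smul, norm_smul]; rfl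
    _ ≤ 1 * ‖r.u‖ + 1 * ‖r.v‖ := by
        gcongr
        · rw [abs_le]; constructor <;> linarith
        · rw [abs_le]; constructor <;> linarith
    _ = ‖r.u‖ + ‖r.v‖ := by ring

lemma locfin {k : ℕ} (shapes : Fin k → Rhombus) (hval : ∀ i, (shapes i).IsValid)
    (x : Set Rhombus)
    (hpair : ∀ r ∈ x, ∀ s ∈ x, r ≠ s → EdgeToEdgePair r s)
    (hshapes : UsesShapes (Set.range shapes) x) (c : Pt) (R : ℝ) :
    {r | r ∈ x ∧ (r.support ∩ closedBall c R).Nonempty}.Finite := by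
  have main : ∀ i : Fin k,
      {r | r ∈ x ∧ r.u = (shapes i).u ∧ r.v = (shapes i).v ∧
        (r.support ∩ closedBall c R).Nonempty}.Finite := by
    intro i
    set A := {r | r ∈ x ∧ r.u = (shapes i).u ∧ r.v = (shapes i).v ∧
        (r.support ∩ closedBall c R).Nonempty} with hA
    obtain ⟨ρ, hρ, hsepρ⟩ := exists_sep (hval i).1
    have hinj : Set.InjOn Rhombus.pos A := by
      rintro ⟨p1, u1, v1⟩ h1 ⟨p2, u2, v2⟩ h2 hpq
      obtain ⟨_, hu1, hv1, _⟩ := h1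
      obtain ⟨_, hu2, hv2, _⟩ := h2
      simp only at hpq hu1 hv1 hu2 hv2
      subst hpq
      rw [Rhombus.mk.injEq]
      exact ⟨rfl, hu1.trans hu2.symm, hv1.trans hv2.symm⟩
    have himg : Rhombus.pos '' A ⊆
        closedBall c (R + (‖(shapes i).u‖ + ‖(shapes i).v‖)) := by
      rintro _ ⟨r, ⟨_, hu, hv, z, hz1, hz2⟩, rfl⟩
      have h1 : dist z r.pos ≤ ‖r.u‖ + ‖r.v‖ := by
        have := support_subset_ball r hz1
        rwa [mem_closedBall] at this
      rw [mem_closedBall]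
      calc dist r.pos c ≤ dist r.pos z + dist z c := dist_triangle _ _ _
        _ ≤ (‖r.u‖ + ‖r.v‖) + R := by
            rw [dist_comm r.pos z]
            exact add_le_add h1 (mem_closedBall.mp hz2)
        _ = R + (‖(shapes i).u‖ + ‖(shapes i).v‖) := by rw [hu, hv]; ring
    have hsep' : ∀ p ∈ Rhombus.pos '' A, ∀ q ∈ Rhombus.pos '' A, p ≠ q → ρ ≤ dist p q := by
      rintro _ ⟨r, hr, rfl⟩ _ ⟨s, hs, rfl⟩ hne
      by_contra hlt
      push_neg at hlt
      have hwnorm : ‖s.pos - r.pos‖ < ρ := by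
        rw [← dist_eq_norm, dist_comm]; exact hlt
      obtain ⟨a, b, hw, ha, hb⟩ := hsepρ _ hwnorm
      have hrs : r ≠ s := by
        intro hEq; exact hne (by rw [hEq])
      have hE := hpair r hr.1 s hs.1 hrs
      refine not_e2e ?_ ?_ ?_ ?_ ha hb hE
      · rw [hr.2.1, hr.2.2.1]; exact (hval i).1
      · rw [hs.2.1, hr.2.1]
      · rw [hs.2.2.1, hr.2.2.1]
      · rw [← hr.2.1, ← hr.2.2.1] at hw
        have : s.pos = r.pos + (s.pos - r.pos) := by module
        rw [this, hw]; module
    have hfin : (Rhombus.pos '' A).Finite :=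
      finite_of_separated hρ himg hsep'
    exact Set.Finite.of_finite_image hfin hinj
  refine (Set.Finite.biUnion (Set.finite_univ (α := Fin k)) fun i _ => main i).subset ?_
  rintro r ⟨hr, hne⟩
  obtain ⟨sh, ⟨i, rfl⟩, hss⟩ := hshapes r hr
  exact Set.mem_biUnion (Set.mem_univ i) ⟨hr, hss.1, hss.2, hne⟩

/-! ### Fresh tiles -/

def freshAux {k : ℕ} : List (Fin k) → ℕ → List (SymbTile k)
  | [], _ => []
  | i :: l, N => (i, N, N + 1, N + 2, N + 3) :: freshAux l (N + 4)

lemma freshAux_fst {k : ℕ} : ∀ (l : List (Fin k)) (N : ℕ), ∀ t ∈ freshAux l N, t.1 ∈ l := by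
  intro l
  induction l with
  | nil => intro N t ht; simp [freshAux] at ht
  | cons i l ih =>
    intro N t ht
    rcases List.mem_cons.mp ht with rfl | ht
    · exact List.mem_cons_self
    · exact List.mem_cons_of_mem _ (ih (N + 4) t ht)

lemma freshAux_surj {k : ℕ} : ∀ (l : List (Fin k)) (N : ℕ), ∀ i ∈ l,
    ∃ t ∈ freshAux l N, t.1 = i := by
  intro l
  induction l with
  | nil => intro N i hi; simp at hi
  | cons j l ih =>
    intro N i hi
    rcases List.mem_cons.mp hi with rfl | hi
    · exact ⟨(i, N, N + 1, N + 2, N + 3), List.mem_cons_self, rfl⟩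
    · obtain ⟨t, ht, hti⟩ := ih (N + 4) i hi
      exact ⟨t, List.mem_cons_of_mem _ ht, hti⟩

lemma allColors_freshAux {k : ℕ} : ∀ (l : List (Fin k)) (N : ℕ),
    allColors (freshAux l N) = List.range' N (4 * l.length) := by
  intro l
  induction l with
  | nil => intro N; simp [freshAux, allColors]
  | cons i l ih =>
    intro N
    have h4 : 4 * (i :: l).length = (4 * l.length + 1 + 1 + 1) + 1 := by
      simp [List.length_cons]; ring
    rw [h4, List.range'_succ]
    rw [show 4 * l.length + 1 + 1 + 1 = (4 * l.length + 1 + 1) + 1 from rfl, List.range'_succ]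
    rw [List.range'_succ, List.range'_succ]
    show (N :: (N + 1) :: (N + 2) :: (N + 3) :: []) ++ allColors (freshAux l (N + 4)) = _
    rw [ih (N + 4)]
    simp only [List.cons_append, List.nil_append]

lemma mem_allColors {k : ℕ} : ∀ (L : List (SymbTile k)) (t : SymbTile k), t ∈ L →
    ∀ c ∈ tileColors t, c ∈ allColors L := by
  intro L
  induction L with
  | nil => intro t ht; simp at ht
  | cons s L ih =>
    intro t ht c hc
    rcases List.mem_cons.mp ht with rfl | ht
    · exact List.mem_append_left _ hc
    · exact List.mem_append_right _ (ih t ht c hc)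

lemma allColors_nodup_unique {k : ℕ} : ∀ (L : List (SymbTile k)), (allColors L).Nodup →
    ∀ t ∈ L, ∀ t' ∈ L, ∀ c, c ∈ tileColors t → c ∈ tileColors t' → t = t' := by
  intro L
  induction L with
  | nil => intro _ t ht; simp at ht
  | cons s L ih =>
    intro hnd t ht t' ht' c hc hc'
    rw [show allColors (s :: L) = tileColors s ++ allColors L from rfl,
      List.nodup_append'] at hnd
    obtain ⟨hnd1, hnd2, hdisj⟩ := hnd
    rcases List.mem_cons.mp ht with hts | ht <;> rcases List.mem_cons.mp ht' with hts' | ht'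
    · rw [hts, hts']
    · exact absurd (mem_allColors L t' ht' c hc') (hdisj (hts ▸ hc))
    · exact absurd (mem_allColors L t ht c hc) (hdisj (hts' ▸ hc'))
    · exact ih hnd2 t ht t' ht' c hc hc'

lemma tileColors_nodup {k : ℕ} : ∀ (L : List (SymbTile k)), (allColors L).Nodup →
    ∀ t ∈ L, (tileColors t).Nodup := by
  intro L
  induction L with
  | nil => intro _ t ht; simp at ht
  | cons s L ih =>
    intro hnd t ht
    rw [show allColors (s :: L) = tileColors s ++ allColors L from rfl,
      List.nodup_append] at hnd
    rcases List.mem_cons.mp ht with rfl | ht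
    · exact hnd.1
    · exact ih hnd.2.1 t ht

lemma color_le_encode {k : ℕ} (t : SymbTile k) : ∀ c ∈ tileColors t, c ≤ Encodable.encode t := by
  obtain ⟨i, c1, c2, c3, c4⟩ := t
  intro c hc
  have he : Encodable.encode ((i, c1, c2, c3, c4) : SymbTile k)
      = Nat.pair (Encodable.encode i)
          (Nat.pair c1 (Nat.pair c2 (Nat.pair c3 c4))) := by
    simp [Encodable.encode_prod_val]
  rw [he]
  simp only [tileColors, List.mem_cons, List.not_mem_nil, or_false] at hc
  have h1 := Nat.right_le_pair (Encodable.encode i) (Nat.pair c1 (Nat.pair c2 (Nat.pair c3 c4)))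
  have h2 := Nat.left_le_pair c1 (Nat.pair c2 (Nat.pair c3 c4))
  have h3 := Nat.right_le_pair c1 (Nat.pair c2 (Nat.pair c3 c4))
  have h4 := Nat.left_le_pair c2 (Nat.pair c3 c4)
  have h5 := Nat.right_le_pair c2 (Nat.pair c3 c4)
  have h6 := Nat.left_le_pair c3 c4
  have h7 := Nat.right_le_pair c3 c4
  rcases hc with rfl | rfl | rfl | rfl <;> omega

lemma color_le_encode_list {k : ℕ} : ∀ (L : List (SymbTile k)), ∀ c ∈ allColors L,
    c ≤ Encodable.encode L := by
  intro L
  induction L with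
  | nil => intro c hc; simp [allColors] at hc
  | cons t L ih =>
    intro c hc
    rw [Encodable.encode_list_cons]
    rcases List.mem_append.mp hc with hc | hc
    · have := color_le_encode t c hc
      have := Nat.left_le_pair (Encodable.encode t) (Encodable.encode L)
      omega
    · have := ih c hc
      have := Nat.right_le_pair (Encodable.encode t) (Encodable.encode L)
      omega

lemma add_const_computable (c : ℕ) : Computable (fun N : ℕ => N + c) :=
  (Primrec.nat_add.comp Primrec.id (Primrec.const c)).to_comp

lemma freshAux_computable {k : ℕ} (l : List (Fin k)) :
    Computable (fun N => freshAux (k := k) l N) := by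
  induction l with
  | nil => exact Computable.const []
  | cons i l ih =>
    have hhead : Computable (fun N : ℕ => ((i, N, N + 1, N + 2, N + 3) : SymbTile k)) :=
      (Computable.const i).pair (Computable.id.pair ((add_const_computable 1).pair
        ((add_const_computable 2).pair (add_const_computable 3))))
    have htail : Computable (fun N : ℕ => freshAux (k := k) l (N + 4)) :=
      ih.comp (add_const_computable 4)
    exact Computable.list_cons.comp hhead htail

lemma phi_computable {k : ℕ} (l : List (Fin k)) :
    Computable (fun T' : List (SymbTile k) =>
      T' ++ freshAux l (Encodable.encode T' + 1)) := by
  have h1 : Computable (fun T' : List (SymbTile k) => Encodable.encode T' + 1) :=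
    (add_const_computable 1).comp Computable.encode
  exact Computable.list_append.comp Computable.id ((freshAux_computable l).comp h1)

lemma Rhombus.ext' {r s : Rhombus} (h1 : r.pos = s.pos) (h2 : r.u = s.u)
    (h3 : r.v = s.v) : r = s := by
  cases r; cases s; simp_all

lemma no_fresh {k : ℕ} (shapes : Fin k → Rhombus) (hval : ∀ i, (shapes i).IsValid)
    (T' Tf : List (SymbTile k))
    (hnd : (allColors Tf).Nodup) (hnew : ∀ c ∈ allColors Tf, c ∉ allColors T')
    (y : Set ColoredRhombus) (hy : IsColoredTiling y)
    (hreal : ∀ t ∈ y, ∃ p ∈ T' ++ Tf, Realizes shapes t p)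
    (ct : ColoredRhombus) (hct : ct ∈ y) (p : SymbTile k) (hp : p ∈ Tf)
    (hrz : Realizes shapes ct p) : False := by
  obtain ⟨⟨hvalid, hcover, hpair⟩, hinj, hmatch⟩ := hy
  set r := ct.shape with hr
  have hrmem : r ∈ eraseColors y := ⟨ct, hct, rfl⟩
  have hrv : r.IsValid := hvalid r hrmem
  have h := hrv.1
  set m := r.pos + (2⁻¹ : ℝ) • r.u with hm
  have hm_r : m ∈ r.support :=
    ⟨2⁻¹, 0, ⟨by norm_num, by norm_num⟩, ⟨le_refl _, by norm_num⟩, by rw [hm]; module⟩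
  have hshapes : UsesShapes (Set.range shapes) (eraseColors y) := by
    rintro _ ⟨cs, hcs, rfl⟩
    obtain ⟨p', _, hrz'⟩ := hreal cs hcs
    exact ⟨shapes p'.1, ⟨p'.1, rfl⟩, hrz'.1⟩
  set q : ℕ → Pt := fun n => m - ((n + 1 : ℝ)⁻¹) • r.v with hqdef
  have hqn : ∀ n : ℕ, q n = m - ((n + 1 : ℝ)⁻¹) • r.v := fun n => rfl
  have hqpos : ∀ n : ℕ, (0:ℝ) < (n + 1 : ℝ)⁻¹ := fun n => by positivity
  have hqr : ∀ n, q n ∉ r.support := by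
    rintro n ⟨a, b, ⟨ha0, ha1⟩, ⟨hb0, hb1⟩, heq⟩
    rw [hqn n] at heq
    have hz : ((2⁻¹:ℝ) - a) • r.u + (-(n + 1 : ℝ)⁻¹ - b) • r.v = 0 := by
      have hid : ((2⁻¹:ℝ) - a) • r.u + (-(n + 1 : ℝ)⁻¹ - b) • r.v
          = (m - ((n + 1 : ℝ)⁻¹) • r.v) - (r.pos + a • r.u + b • r.v) := by
        rw [hm]; module
      rw [heq, sub_self] at hid
      exact hid
    have hb' := (pair_coeffs h _ _ hz).2
    have := hqpos n
    linarith
  have hcov : ∀ n, ∃ s ∈ eraseColors y, q n ∈ s.support := by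
    intro n
    have : q n ∈ ⋃ s ∈ eraseColors y, Rhombus.support s := by rw [hcover]; trivial
    simpa using this
  choose g hg1 hg2 using hcov
  set F := {s | s ∈ eraseColors y ∧ (s.support ∩ closedBall m ‖r.v‖).Nonempty} with hFdef
  have hgF : ∀ n, g n ∈ F := by
    intro n
    refine ⟨hg1 n, ⟨q n, hg2 n, ?_⟩⟩
    have hd : q n - m = -(((n + 1 : ℝ)⁻¹) • r.v) := by rw [hqn n]; module
    rw [mem_closedBall, dist_eq_norm, hd, norm_neg, norm_smul,
      Real.norm_of_nonneg (le_of_lt (hqpos n))]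
    have h1 : (n + 1 : ℝ)⁻¹ ≤ 1 := by
      rw [inv_le_one_iff₀]; right; exact le_add_of_nonneg_left (Nat.cast_nonneg n)
    nlinarith [norm_nonneg r.v]
  have hF : F.Finite := locfin shapes hval (eraseColors y) hpair hshapes m ‖r.v‖
  haveI : Finite ↥F := hF.to_subtype
  obtain ⟨s0, hs0⟩ := Finite.exists_infinite_fiber (fun n => (⟨g n, hgF n⟩ : ↥F))
  set s := (s0 : Rhombus) with hs
  have hsmem : s ∈ eraseColors y := s0.2.1
  have hfib : {n | g n = s}.Infinite := by
    refine ((Set.infinite_coe_iff.mp hs0).mono ?_)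
    intro n hn
    have : (⟨g n, hgF n⟩ : ↥F) = s0 := hn
    simpa [hs] using congrArg Subtype.val this
  have hms : m ∈ s.support := by
    rw [← (support_isClosed s).closure_eq]
    rw [Metric.mem_closure_iff]
    intro ε hε
    obtain ⟨n, hn, hngt⟩ := hfib.exists_gt ⌈‖r.v‖ / ε⌉₊
    refine ⟨q n, by rw [← hn]; exact hg2 n, ?_⟩
    have hd : m - q n = ((n + 1 : ℝ)⁻¹) • r.v := by rw [hqn n]; module
    rw [dist_eq_norm, hd, norm_smul, Real.norm_of_nonneg (le_of_lt (hqpos n))]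
    have h1 : ‖r.v‖ / ε < (n + 1 : ℝ) := by
      calc ‖r.v‖ / ε ≤ (⌈‖r.v‖ / ε⌉₊ : ℝ) := Nat.le_ceil _
        _ < (n + 1 : ℝ) := by
            have : (⌈‖r.v‖ / ε⌉₊ : ℝ) < (n : ℝ) := by exact_mod_cast hngt
            linarith
    have h2 : ‖r.v‖ < ε * (n + 1 : ℝ) := by
      rw [div_lt_iff₀ hε] at h1
      linarith [h1]
    rw [inv_mul_lt_iff₀ (by positivity : (0:ℝ) < (n + 1 : ℝ))]
    linarith
  have hsne : s ≠ r := by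
    obtain ⟨n, hn⟩ := hfib.nonempty
    intro hEq
    exact hqr n (by rw [← hEq, ← hn]; exact hg2 n)
  have hmboth : m ∈ r.support ∩ s.support := ⟨hm_r, hms⟩
  have hE := hpair r hrmem s hsmem (fun hEq => hsne hEq.symm)
  -- m is not a vertex of r
  have hmnv : ∀ pt ∈ r.vertices, m ≠ pt := by
    intro pt hptv hmeq
    have hmem : pt = r.pos ∨ pt = r.pos + r.u ∨ pt = r.pos + r.v ∨ pt = r.pos + r.u + r.v := by
      simpa [Rhombus.vertices] using hptv
    rcases hmem with rfl | rfl | rfl | rfl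
    · have hz : ((2⁻¹:ℝ)) • r.u + (0:ℝ) • r.v = 0 := by
        have hid : ((2⁻¹:ℝ)) • r.u + (0:ℝ) • r.v = m - r.pos := by rw [hm]; module
        rw [hmeq, sub_self] at hid; exact hid
      have := (pair_coeffs h _ _ hz).1; norm_num at this
    · have hz : ((2⁻¹:ℝ) - 1) • r.u + (0:ℝ) • r.v = 0 := by
        have hid : ((2⁻¹:ℝ) - 1) • r.u + (0:ℝ) • r.v = m - (r.pos + r.u) := by rw [hm]; module
        rw [hmeq, sub_self] at hid; exact hid
      have := (pair_coeffs h _ _ hz).1; norm_num at this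
    · have hz : ((2⁻¹:ℝ)) • r.u + (-1:ℝ) • r.v = 0 := by
        have hid : ((2⁻¹:ℝ)) • r.u + (-1:ℝ) • r.v = m - (r.pos + r.v) := by rw [hm]; module
        rw [hmeq, sub_self] at hid; exact hid
      have := (pair_coeffs h _ _ hz).2; norm_num at this
    · have hz : ((2⁻¹:ℝ) - 1) • r.u + (-1:ℝ) • r.v = 0 := by
        have hid : ((2⁻¹:ℝ) - 1) • r.u + (-1:ℝ) • r.v = m - (r.pos + r.u + r.v) := by
          rw [hm]; module
        rw [hmeq, sub_self] at hid; exact hid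
      have := (pair_coeffs h _ _ hz).2; norm_num at this
  rcases hE with hE | ⟨pt, hptv, _, hset⟩ | ⟨e, heR, heS, hset⟩
  · rw [hE] at hmboth; exact hmboth
  · rw [hset] at hmboth
    exact hmnv pt hptv hmboth
  -- the edge case
  obtain ⟨i, hi⟩ := heR
  have hme : m ∈ e := hset ▸ hmboth
  have hi0 : r.edge 0 = e := by
    fin_cases i
    · exact hi
    · exfalso
      rw [← hi] at hme
      replace hme : m ∈ segment ℝ (r.pos + r.u) (r.pos + r.u + r.v) := hme
      rw [seg_mem_iff] at hme
      obtain ⟨t, _, heq⟩ := hme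
      have hz : (-(2⁻¹:ℝ)) • r.u + (-t) • r.v = 0 := by
        have hid : (-(2⁻¹:ℝ)) • r.u + (-t) • r.v
            = m - ((r.pos + r.u) + t • ((r.pos + r.u + r.v) - (r.pos + r.u))) := by
          rw [hm]; module
        rw [← heq, sub_self] at hid; exact hid
      have := (pair_coeffs h _ _ hz).1; norm_num at this
    · exfalso
      rw [← hi] at hme
      replace hme : m ∈ segment ℝ (r.pos + r.u + r.v) (r.pos + r.v) := hme
      rw [seg_mem_iff] at hme
      obtain ⟨t, _, heq⟩ := hme
      have hz : ((2⁻¹:ℝ) - 1 + t) • r.u + (-1:ℝ) • r.v = 0 := by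
        have hid : ((2⁻¹:ℝ) - 1 + t) • r.u + (-1:ℝ) • r.v
            = m - ((r.pos + r.u + r.v) + t • ((r.pos + r.v) - (r.pos + r.u + r.v))) := by
          rw [hm]; module
        rw [← heq, sub_self] at hid; exact hid
      have := (pair_coeffs h _ _ hz).2; norm_num at this
    · exfalso
      rw [← hi] at hme
      replace hme : m ∈ segment ℝ (r.pos + r.v) r.pos := hme
      rw [seg_mem_iff] at hme
      obtain ⟨t, _, heq⟩ := hme
      have hz : ((2⁻¹:ℝ)) • r.u + (t - 1) • r.v = 0 := by
        have hid : ((2⁻¹:ℝ)) • r.u + (t - 1) • r.v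
            = m - ((r.pos + r.v) + t • (r.pos - (r.pos + r.v))) := by
          rw [hm]; module
        rw [← heq, sub_self] at hid; exact hid
      have := (pair_coeffs h _ _ hz).1; norm_num at this
  obtain ⟨j, hj⟩ := heS
  obtain ⟨cs, hcs, hcssh⟩ := hsmem
  have hneq : ct.shape ≠ cs.shape := by
    rw [← hr, hcssh]
    exact fun hEq => hsne (hEq.symm ▸ rfl)
  have hcolor := hmatch ct hct cs hcs hneq 0 j
    (by rw [← hr, hcssh, hi0, hj])
  obtain ⟨p', hp', hrz'⟩ := hreal cs hcs
  have hcol : SymbTile.colors p 0 = SymbTile.colors p' j := by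
    rw [← hrz.2, ← hrz'.2]; exact hcolor
  have hc0 : SymbTile.colors p 0 ∈ tileColors p := by
    simp [SymbTile.colors, tileColors]
  have hc0' : SymbTile.colors p' j ∈ tileColors p' := by
    fin_cases j <;> simp [SymbTile.colors, tileColors]
  rcases List.mem_append.mp hp' with hpT | hpTf
  · exact hnew _ (mem_allColors Tf p hp _ hc0)
      (by rw [hcol]; exact mem_allColors T' p' hpT _ hc0')
  · have hc0'' : SymbTile.colors p 0 ∈ tileColors p' := by rw [hcol]; exact hc0'
    have hpp : p = p' := allColors_nodup_unique Tf hnd p hp p' hpTf _ hc0 hc0''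
    subst hpp
    have hj0 : j = 0 := by
      have hndp := tileColors_nodup Tf hnd p hp
      fin_cases j
      · rfl
      · exfalso
        simp [SymbTile.colors] at hcol
        simp [tileColors, List.nodup_cons] at hndp
        tauto
      · exfalso
        simp [SymbTile.colors] at hcol
        simp [tileColors, List.nodup_cons] at hndp
        tauto
      · exfalso
        simp [SymbTile.colors] at hcol
        simp [tileColors, List.nodup_cons] at hndp
        tauto
    rw [hj0] at hj
    have hru : r.u = (shapes p.1).u := hrz.1.1
    have hsu : s.u = (shapes p.1).u := by rw [← hcssh]; exact hrz'.1.1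
    have hsv : s.v = (shapes p.1).v := by rw [← hcssh]; exact hrz'.1.2
    have hrv' : r.v = (shapes p.1).v := hrz.1.2
    have hseg : segment ℝ r.pos (r.pos + r.u) = segment ℝ s.pos (s.pos + r.u) := by
      have e1 : r.edge 0 = segment ℝ r.pos (r.pos + r.u) := rfl
      have e2 : s.edge 0 = segment ℝ s.pos (s.pos + s.u) := rfl
      rw [← e1, hi0, ← hj, e2, hsu, ← hru]
    have hpos : r.pos = s.pos := seg_same_dir (u_ne_zero h) hseg
    exact hsne (Rhombus.ext' hpos (by rw [hru, hsu]) (by rw [hrv', hsv])).symm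

end Aux

/-- Let `X'` be the restriction of the subshift `X` to a
sub-shapeset indexed by `S`.  The map `φ` adding to a `S`-tileset one tile with
fresh colours for each shape outside `S` is computable and satisfies:
`T'` admits a valid tiling projecting into `X'` iff `φ T'` admits a valid tiling
projecting into `X`.  Consequently `Domino(X')` many-one reduces to `Domino(X)`. -/
theorem statement_12 (k : ℕ) (shapes : Fin k → Rhombus)
    (hval : ∀ i, (shapes i).IsValid)
    (X : Set (Set Rhombus)) (hsub : IsSubshift (Set.range shapes) X)
    (S : Finset (Fin k)) :
    ∃ φ : List (SymbTile k) → List (SymbTile k),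
      Computable φ ∧
      (∀ T' : List (SymbTile k), (∀ t ∈ T', t.1 ∈ S) → FreshExtension S T' (φ T')) ∧
      (∀ T' : List (SymbTile k), (∀ t ∈ T', t.1 ∈ S) →
        (DominoPred shapes (restrictShapes (shapes '' (↑S : Set (Fin k))) X) T' ↔
          DominoPred shapes X (φ T'))) := by
  classical
  set L : List (Fin k) := (Sᶜ : Finset (Fin k)).toList with hL
  refine ⟨fun T' => T' ++ freshAux L (Encodable.encode T' + 1), phi_computable L, ?_, ?_⟩
  · -- FreshExtension
    intro T' hT'
    refine ⟨freshAux L (Encodable.encode T' + 1), rfl, ?_, ?_, ?_, ?_⟩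
    · intro t ht
      have := freshAux_fst L _ t ht
      rw [hL, Finset.mem_toList, Finset.mem_compl] at this
      exact this
    · intro i hi
      exact freshAux_surj L _ i (by rw [hL, Finset.mem_toList, Finset.mem_compl]; exact hi)
    · rw [allColors_freshAux]
      exact List.nodup_range' 1
    · intro c hc hc'
      rw [allColors_freshAux, List.mem_range'_1] at hc
      have := color_le_encode_list T' c hc'
      omega
  · -- the equivalence
    intro T' hT'
    set Tf := freshAux L (Encodable.encode T' + 1) with hTf
    have hnd : (allColors Tf).Nodup := by
      rw [hTf, allColors_freshAux]; exact List.nodup_range' 1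
    have hnew : ∀ c ∈ allColors Tf, c ∉ allColors T' := by
      intro c hc hc'
      rw [hTf, allColors_freshAux, List.mem_range'_1] at hc
      have := color_le_encode_list T' c hc'
      omega
    constructor
    · rintro ⟨x, hx, hfrom, hmem⟩
      exact ⟨x, hx, fun t ht => by
        obtain ⟨p, hp, hr⟩ := hfrom t ht
        exact ⟨p, List.mem_append_left _ hp, hr⟩, hmem.1⟩
    · rintro ⟨y, hy, hfrom, hmem⟩
      have hclaim : ∀ t ∈ y, ∃ p ∈ T', Realizes shapes t p := by
        intro t ht
        obtain ⟨p, hp, hr⟩ := hfrom t ht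
        rcases List.mem_append.mp hp with hp | hp
        · exact ⟨p, hp, hr⟩
        · exact absurd hr (fun hr => no_fresh shapes hval T' Tf hnd hnew y hy hfrom t ht p hp hr)
      refine ⟨y, hy, hclaim, ⟨hmem, ?_⟩⟩
      rintro _ ⟨cs, hcs, rfl⟩
      obtain ⟨p, hp, hr⟩ := hclaim cs hcs
      exact ⟨shapes p.1, ⟨p.1, hT' p hp, rfl⟩, hr.1⟩
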